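/- Let u : ℝ × ℝ → ℝ be a smooth function of (x,t) with u_xxx(x,t) ≠ 0 for all (x,t), satisfying the evolution equation u_t = u_xx⁶/u_xxx². Define p : ℝ × ℝ → ℝ by p = −2^{1/3}·u_xx. Then p_x(x,t) ≠ 0 for all (x,t), and p satisfies ∂p/∂t = ∂/∂x ( p⁶·p_xx/p_x³ − 3·p⁵/p_x ) at every point (x,t), i.e. the potential variable v with v_x = p solves v_t = v_x⁶ v_xxx/v_xx³ − 3 v_x⁵/v_xx. -/

import Mathlib

/-- Partial derivative with respect to the first (space) variable. -/
noncomputable def pdx (f : ℝ × ℝ → ℝ) : ℝ × ℝ → ℝ :=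
  fun p => deriv (fun x => f (x, p.2)) p.1

/-- Partial derivative with respect to the second (time) variable. -/
noncomputable def pdt (f : ℝ × ℝ → ℝ) : ℝ × ℝ → ℝ :=
  fun p => deriv (fun t => f (p.1, t)) p.2


lemma hasDerivAt_slice_x (f : ℝ × ℝ → ℝ) (hf : ContDiff ℝ (⊤ : ℕ∞) f) (q : ℝ × ℝ) :
    HasDerivAt (fun x => f (x, q.2)) (fderiv ℝ f q (1, 0)) q.1 := by
  have h1 : HasDerivAt (fun x : ℝ => (x, q.2)) ((1 : ℝ), (0 : ℝ)) q.1 :=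
    HasDerivAt.prodMk (hasDerivAt_id q.1) (hasDerivAt_const q.1 q.2)
  exact (hf.differentiable (by simp) (q.1, q.2)).hasFDerivAt.comp_hasDerivAt q.1 h1

lemma hasDerivAt_slice_t (f : ℝ × ℝ → ℝ) (hf : ContDiff ℝ (⊤ : ℕ∞) f) (q : ℝ × ℝ) :
    HasDerivAt (fun t => f (q.1, t)) (fderiv ℝ f q (0, 1)) q.2 := by
  have h1 : HasDerivAt (fun t : ℝ => (q.1, t)) ((0 : ℝ), (1 : ℝ)) q.2 :=
    HasDerivAt.prodMk (hasDerivAt_const q.2 q.1) (hasDerivAt_id q.2)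
  exact (hf.differentiable (by simp) (q.1, q.2)).hasFDerivAt.comp_hasDerivAt q.2 h1

lemma pdx_eq_fderiv (f : ℝ × ℝ → ℝ) (hf : ContDiff ℝ (⊤ : ℕ∞) f) (q : ℝ × ℝ) :
    pdx f q = fderiv ℝ f q (1, 0) := (hasDerivAt_slice_x f hf q).deriv

lemma pdt_eq_fderiv (f : ℝ × ℝ → ℝ) (hf : ContDiff ℝ (⊤ : ℕ∞) f) (q : ℝ × ℝ) :
    pdt f q = fderiv ℝ f q (0, 1) := (hasDerivAt_slice_t f hf q).deriv

lemma contDiff_pdx (f : ℝ × ℝ → ℝ) (hf : ContDiff ℝ (⊤ : ℕ∞) f) :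
    ContDiff ℝ (⊤ : ℕ∞) (pdx f) := by
  have : pdx f = fun q => fderiv ℝ f q (1, 0) := funext (pdx_eq_fderiv f hf)
  rw [this]
  exact (hf.fderiv_right (by exact_mod_cast le_top)).clm_apply contDiff_const

lemma contDiff_pdt (f : ℝ × ℝ → ℝ) (hf : ContDiff ℝ (⊤ : ℕ∞) f) :
    ContDiff ℝ (⊤ : ℕ∞) (pdt f) := by
  have : pdt f = fun q => fderiv ℝ f q (0, 1) := funext (pdt_eq_fderiv f hf)
  rw [this]
  exact (hf.fderiv_right (by exact_mod_cast le_top)).clm_apply contDiff_const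

lemma clairaut (f : ℝ × ℝ → ℝ) (hf : ContDiff ℝ (⊤ : ℕ∞) f) (q : ℝ × ℝ) :
    pdt (pdx f) q = pdx (pdt f) q := by
  have hpdx : pdx f = fun q => fderiv ℝ f q (1, 0) := funext (pdx_eq_fderiv f hf)
  have hpdt : pdt f = fun q => fderiv ℝ f q (0, 1) := funext (pdt_eq_fderiv f hf)
  have hdf : DifferentiableAt ℝ (fderiv ℝ f) q :=
    ((hf.fderiv_right (m := (⊤:ℕ∞)) (by exact_mod_cast le_top)).differentiable (by simp)) q
  have h1 : pdt (pdx f) q = fderiv ℝ (fun r => fderiv ℝ f r (1, 0)) q (0, 1) := by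
    rw [hpdx, pdt_eq_fderiv _ ((hf.fderiv_right (by exact_mod_cast le_top)).clm_apply contDiff_const)]
  have h2 : pdx (pdt f) q = fderiv ℝ (fun r => fderiv ℝ f r (0, 1)) q (1, 0) := by
    rw [hpdt, pdx_eq_fderiv _ ((hf.fderiv_right (by exact_mod_cast le_top)).clm_apply contDiff_const)]
  rw [h1, h2]
  rw [fderiv_clm_apply hdf (differentiableAt_const _),
      fderiv_clm_apply hdf (differentiableAt_const _)]
  simp only [fderiv_fun_const, Pi.zero_apply, ContinuousLinearMap.comp_zero,
    ContinuousLinearMap.add_apply, ContinuousLinearMap.zero_apply, zero_add,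
    ContinuousLinearMap.flip_apply]
  have hsymm : IsSymmSndFDerivAt ℝ f q := hf.contDiffAt.isSymmSndFDerivAt (by
    have h2 : ((2:ℕ∞) : WithTop ℕ∞) = 2 := rfl
    rw [← h2, minSmoothness_of_isRCLikeNormedField]; exact_mod_cast le_top)
  exact hsymm (0, 1) (1, 0)

lemma pdx_const_mul (f : ℝ × ℝ → ℝ) (hf : ContDiff ℝ (⊤ : ℕ∞) f) (k : ℝ) (q : ℝ × ℝ) :
    pdx (fun q => k * f q) q = k * pdx f q := by
  show deriv (fun x => k * f (x, q.2)) q.1 = _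
  rw [deriv_const_mul _ (hasDerivAt_slice_x f hf q).differentiableAt]
  rfl

lemma pdt_const_mul (f : ℝ × ℝ → ℝ) (hf : ContDiff ℝ (⊤ : ℕ∞) f) (k : ℝ) (q : ℝ × ℝ) :
    pdt (fun q => k * f q) q = k * pdt f q := by
  show deriv (fun t => k * f (q.1, t)) q.2 = _
  rw [deriv_const_mul _ (hasDerivAt_slice_t f hf q).differentiableAt]
  rfl

/-- x-slice derivative of a smooth function, expressed via `pdx`. -/
lemma hasDerivAt_slice_x' (f : ℝ × ℝ → ℝ) (hf : ContDiff ℝ (⊤ : ℕ∞) f) (q : ℝ × ℝ) :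
    HasDerivAt (fun x => f (x, q.2)) (pdx f q) q.1 := by
  rw [pdx_eq_fderiv f hf q]
  exact hasDerivAt_slice_x f hf q

/-- Potentialisation of Subcase 1.2: for a solution of `u_t = u_xx⁶/u_xxx²`, the
variable `p = −2^{1/3} u_xx` has `p_x ≠ 0` and satisfies the compatibility identity
`p_t = D_x( p⁶ p_xx/p_x³ − 3 p⁵/p_x )`, i.e. the potential `v` with `v_x = p`
solves `v_t = v_x⁶ v_xxx/v_xx³ − 3 v_x⁵/v_xx`. -/
theorem potentialisation_subcase12
    (u : ℝ × ℝ → ℝ) (hu : ContDiff ℝ (⊤ : ℕ∞) u)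
    (huxxx : ∀ q : ℝ × ℝ, pdx (pdx (pdx u)) q ≠ 0)
    (heq : ∀ q : ℝ × ℝ, pdt u q = (pdx (pdx u) q) ^ 6 / (pdx (pdx (pdx u)) q) ^ 2)
    (p : ℝ × ℝ → ℝ)
    (hp : p = fun q => -(2 : ℝ) ^ ((1 : ℝ) / 3) * pdx (pdx u) q)
    (G : ℝ × ℝ → ℝ)
    (hG : G = fun q =>
      (p q) ^ 6 * pdx (pdx p) q / (pdx p q) ^ 3 - 3 * (p q) ^ 5 / pdx p q) :
    (∀ q : ℝ × ℝ, pdx p q ≠ 0) ∧ (∀ q : ℝ × ℝ, pdt p q = pdx G q) := by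
  set k : ℝ := -(2 : ℝ) ^ ((1 : ℝ) / 3) with hk
  have hkne : k ≠ 0 := by
    have := Real.rpow_pos_of_pos (by norm_num : (0:ℝ) < 2) ((1:ℝ)/3)
    simp only [hk, ne_eq, neg_eq_zero]
    exact ne_of_gt this
  have hk3 : k ^ 3 = -2 := by
    have h2 : ((2:ℝ) ^ ((1:ℝ)/3)) ^ (3:ℕ) = 2 := by
      rw [← Real.rpow_natCast ((2:ℝ) ^ ((1:ℝ)/3)) 3,
          ← Real.rpow_mul (by norm_num : (0:ℝ) ≤ 2)]
      norm_num
    calc k ^ 3 = -(((2:ℝ) ^ ((1:ℝ)/3)) ^ (3:ℕ)) := by rw [hk]; ring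
    _ = -2 := by rw [h2]
  -- smoothness of iterated partials
  have h1 : ContDiff ℝ (⊤ : ℕ∞) (pdx u) := contDiff_pdx u hu
  have h2 : ContDiff ℝ (⊤ : ℕ∞) (pdx (pdx u)) := contDiff_pdx _ h1
  have h3 : ContDiff ℝ (⊤ : ℕ∞) (pdx (pdx (pdx u))) := contDiff_pdx _ h2
  have hut : ContDiff ℝ (⊤ : ℕ∞) (pdt u) := contDiff_pdt u hu
  have hutx : ContDiff ℝ (⊤ : ℕ∞) (pdx (pdt u)) := contDiff_pdx _ hut
  have hp' : p = fun q => k * pdx (pdx u) q := hp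
  -- first partial of p
  have hpx : ∀ q : ℝ × ℝ, pdx p q = k * pdx (pdx (pdx u)) q := by
    intro q
    rw [hp', pdx_const_mul _ h2 k q]
  have hpxfun : pdx p = fun q => k * pdx (pdx (pdx u)) q := funext hpx
  have hpxx : ∀ q : ℝ × ℝ, pdx (pdx p) q = k * pdx (pdx (pdx (pdx u))) q := by
    intro q
    rw [hpxfun, pdx_const_mul _ h3 k q]
  constructor
  · intro q
    rw [hpx q]
    exact mul_ne_zero hkne (huxxx q)
  · -- key: G = k * pdx (pdt u)
    have hGfun : G = fun q => k * pdx (pdt u) q := by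
      funext q
      have hA : HasDerivAt (fun x => pdx (pdx u) (x, q.2)) (pdx (pdx (pdx u)) q) q.1 :=
        hasDerivAt_slice_x' _ h2 q
      have hB : HasDerivAt (fun x => pdx (pdx (pdx u)) (x, q.2)) (pdx (pdx (pdx (pdx u))) q) q.1 :=
        hasDerivAt_slice_x' _ h3 q
      have hBne : pdx (pdx (pdx u)) ((q.1 : ℝ), q.2) ≠ 0 := huxxx (q.1, q.2)
      have hquot := (hA.pow 6).div (hB.pow 2) (pow_ne_zero 2 hBne)
      have hDt : pdx (pdt u) q =
          (6 * (pdx (pdx u) q) ^ 5 * pdx (pdx (pdx u)) q * (pdx (pdx (pdx u)) q) ^ 2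
            - (pdx (pdx u) q) ^ 6 * (2 * pdx (pdx (pdx u)) q * pdx (pdx (pdx (pdx u))) q))
            / ((pdx (pdx (pdx u)) q) ^ 2) ^ 2 := by
        have hfun : (fun x => pdt u (x, q.2))
            = fun x => (pdx (pdx u) (x, q.2)) ^ 6 / (pdx (pdx (pdx u)) (x, q.2)) ^ 2 :=
          funext fun x => heq (x, q.2)
        show deriv (fun x => pdt u (x, q.2)) q.1 = _
        rw [hfun, show (fun x => pdx (pdx u) (x, q.2) ^ 6 / pdx (pdx (pdx u)) (x, q.2) ^ 2) = (fun x => pdx (pdx u) (x, q.2)) ^ 6 / (fun x => pdx (pdx (pdx u)) (x, q.2)) ^ 2 from rfl, hquot.deriv]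
        norm_num
      have hpq : p q = k * pdx (pdx u) q := by rw [hp']
      rw [hG]
      beta_reduce
      rw [hpq, hpx q, hpxx q, hDt]
      have hb : pdx (pdx (pdx u)) q ≠ 0 := huxxx q
      set a := pdx (pdx u) q
      set b := pdx (pdx (pdx u)) q
      set c := pdx (pdx (pdx (pdx u))) q
      field_simp
      have hs3 : ((2:ℝ) ^ ((1:ℝ)/3)) ^ 3 = 2 := by
        have e : k ^ 3 = -((2:ℝ) ^ ((1:ℝ)/3)) ^ 3 := by rw [hk]; ring
        linarith
      linear_combination (3 * a ^ 5 * b ^ 2 - a ^ 6 * c) * hs3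
    intro q
    have step1 : pdt p q = k * pdt (pdx (pdx u)) q := by
      rw [hp', pdt_const_mul _ h2 k q]
    have step2 : pdt (pdx (pdx u)) q = pdx (pdx (pdt u)) q := by
      rw [clairaut (pdx u) h1 q]
      have : pdt (pdx u) = pdx (pdt u) := funext (clairaut u hu)
      rw [this]
    have step3 : pdx G q = k * pdx (pdx (pdt u)) q := by
      rw [hGfun, pdx_const_mul _ hutx k q]
    rw [step1, step2, step3]
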